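/- Let n ≥ 1 and let L be an infinite subset of ℕ. Then for every set F in the Schreier family S_{n-1}, the sum of the coordinates of the repeated average a(n,L) over F satisfies Σ_{k∈F} a(n,L)(k) < 3/(min L). -/

import Mathlib

/-- `E < F` for finite sets of naturals: every element of `E` is less than
every element of `F` (vacuously true if one of them is empty). -/
def FinsetLT (E F : Finset ℕ) : Prop := ∀ a ∈ E, ∀ b ∈ F, a < b

/-- The convolution `M * N` of two families of finite subsets of `ℕ`: it consists of `∅`
together with all unions `E₁ ∪ … ∪ E_k` where `E₁ < … < E_k` are nonempty sets in `N`
and `{min E₁, …, min E_k} ∈ M`. -/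
def SchreierConv (M N : Set (Finset ℕ)) : Set (Finset ℕ) :=
  {E | E = ∅ ∨ ∃ (k : ℕ) (Es : Fin k → Finset ℕ),
    (∀ i, Es i ∈ N) ∧ (∀ i, (Es i).Nonempty) ∧
    (∀ i j : Fin k, i < j → FinsetLT (Es i) (Es j)) ∧
    (Finset.image (fun i => sInf (↑(Es i) : Set ℕ)) Finset.univ) ∈ M ∧
    E = Finset.univ.biUnion Es}

/-- The first Schreier family `S₁ = {E : #E ≤ min E} ∪ {∅}`. -/
def SchreierOne : Set (Finset ℕ) := {E | ∀ k ∈ E, E.card ≤ k}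

/-- The Schreier families: `S₀` = singletons and `∅`, `S₁` as above,
`S_{n+1} = S₁ * S_n`. -/
def Schreier : ℕ → Set (Finset ℕ)
  | 0 => {E | E.card ≤ 1}
  | 1 => SchreierOne
  | n + 2 => SchreierConv SchreierOne (Schreier (n + 1))

/-- The iterated removal of supports used in the definition of repeated averages:
`L₁ = L`, `L_{k+1} = L_k \ supp (f (L_k))`. -/
noncomputable def iterRem (f : Set ℕ → (ℕ →₀ ℝ)) (L : Set ℕ) : ℕ → Set ℕ
  | 0 => L
  | k + 1 => iterRem f L k \ ↑(f (iterRem f L k)).support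

/-- The repeated averages `a(n, L) ∈ c₀₀(ℕ)`: `a(0, L) = e_{min L}` and
`a(n+1, L) = (1 / l₁) (a(n, L₁) + … + a(n, L_{l₁}))`, where `l₁ = min L`, `L₁ = L` and
`L_{k+1} = L_k \ supp a(n, L_k)`. -/
noncomputable def repAvg : ℕ → Set ℕ → (ℕ →₀ ℝ) :=
  Nat.rec (fun L => Finsupp.single (sInf L) 1)
    (fun _ ih L => ((sInf L : ℕ) : ℝ)⁻¹ • ∑ k ∈ Finset.range (sInf L), ih (iterRem ih L k))

namespace Stmt7Aux

def Good (M : Set ℕ) : Prop := M.Infinite ∧ 0 ∉ M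

lemma Good.nonempty {M : Set ℕ} (h : Good M) : M.Nonempty := h.1.nonempty

lemma Good.sInf_mem {M : Set ℕ} (h : Good M) : sInf M ∈ M := Nat.sInf_mem h.nonempty

lemma Good.sInf_pos {M : Set ℕ} (h : Good M) : 0 < sInf M := by
  rcases Nat.eq_zero_or_pos (sInf M) with h0 | h0
  · exact absurd (h0 ▸ h.sInf_mem) h.2
  · exact h0

lemma repAvg_zero (M : Set ℕ) : repAvg 0 M = Finsupp.single (sInf M) 1 := rfl

lemma repAvg_succ (n : ℕ) (M : Set ℕ) : repAvg (n+1) M =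
    ((sInf M : ℕ) : ℝ)⁻¹ • ∑ k ∈ Finset.range (sInf M), repAvg n (iterRem (repAvg n) M k) := rfl

lemma iterRem_zero (f : Set ℕ → (ℕ →₀ ℝ)) (M : Set ℕ) : iterRem f M 0 = M := rfl

lemma iterRem_succ (f : Set ℕ → (ℕ →₀ ℝ)) (M : Set ℕ) (k : ℕ) :
    iterRem f M (k+1) = iterRem f M k \ ↑(f (iterRem f M k)).support := rfl

lemma iterRem_subset (f : Set ℕ → (ℕ →₀ ℝ)) (M : Set ℕ) : ∀ k, iterRem f M k ⊆ M
  | 0 => subset_rfl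
  | k + 1 => (Set.diff_subset).trans (iterRem_subset f M k)

lemma Good.iterRem {M : Set ℕ} (h : Good M) (f : Set ℕ → (ℕ →₀ ℝ)) :
    ∀ k, Good (iterRem f M k)
  | 0 => h
  | k + 1 => by
    obtain ⟨h1, h2⟩ := Good.iterRem h f k
    exact ⟨h1.diff ((f _).support.finite_toSet), fun hx => h2 hx.1⟩

lemma repAvg_nonneg : ∀ (n : ℕ) (M : Set ℕ) (x : ℕ), 0 ≤ repAvg n M x
  | 0, M, x => by
    rw [repAvg_zero, Finsupp.single_apply]
    split <;> norm_num
  | n + 1, M, x => by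
    rw [repAvg_succ, Finsupp.smul_apply, Finsupp.finset_sum_apply]
    exact mul_nonneg (by positivity) (Finset.sum_nonneg fun k _ => repAvg_nonneg n _ x)

end Stmt7Aux
namespace Stmt7Aux

lemma repAvg_succ_apply (n : ℕ) (M : Set ℕ) (x : ℕ) :
    repAvg (n+1) M x =
      ((sInf M : ℕ) : ℝ)⁻¹ * ∑ k ∈ Finset.range (sInf M), repAvg n (iterRem (repAvg n) M k) x := by
  rw [repAvg_succ, Finsupp.smul_apply, Finsupp.finset_sum_apply, smul_eq_mul]

lemma iterRem_mono (f : Set ℕ → (ℕ →₀ ℝ)) (M : Set ℕ) {j k : ℕ} (h : j ≤ k) :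
    iterRem f M k ⊆ iterRem f M j := by
  induction k with
  | zero => simp_all
  | succ k ih =>
    rcases Nat.lt_or_ge j (k+1) with h' | h'
    · exact (Set.diff_subset).trans (ih (Nat.lt_succ_iff.mp h'))
    · have : j = k + 1 := le_antisymm h h'
      simp [this]

/-- Main structural facts, by induction on `n`. -/
lemma struct : ∀ (n : ℕ) (M : Set ℕ), Good M →
    (↑(repAvg n M).support ⊆ M) ∧
    (∑ x ∈ (repAvg n M).support, repAvg n M x = 1) ∧
    (∀ x ∈ (repAvg n M).support, ∀ y ∈ M, y ∉ (repAvg n M).support → x < y) := by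
  intro n
  induction n with
  | zero =>
    intro M hM
    have hs : (repAvg 0 M).support = {sInf M} := by
      rw [repAvg_zero]; exact Finsupp.support_single_ne_zero _ one_ne_zero
    refine ⟨?_, ?_, ?_⟩
    · rw [hs]; simpa using hM.sInf_mem
    · rw [hs, repAvg_zero]; simp
    · intro x hx y hy hy'
      rw [hs, Finset.mem_singleton] at hx hy'
      subst hx
      exact lt_of_le_of_ne (Nat.sInf_le hy) (fun h => hy' h.symm)
  | succ n ih =>
    intro M hM
    set l := sInf M with hl
    have hl1 : 1 ≤ l := hM.sInf_pos
    set A : ℕ → (ℕ →₀ ℝ) := fun k => repAvg n (iterRem (repAvg n) M k) with hA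
    have hGk : ∀ k, Good (iterRem (repAvg n) M k) := hM.iterRem _
    have hsupp : (repAvg (n+1) M).support =
        (Finset.range l).biUnion (fun k => (A k).support) := by
      ext x
      simp only [Finsupp.mem_support_iff, repAvg_succ_apply, Finset.mem_biUnion]
      constructor
      · intro h
        by_contra hc
        push_neg at hc
        apply h
        rw [Finset.sum_eq_zero hc, mul_zero]
      · rintro ⟨k, hk, hne⟩
        have h1 : (0:ℝ) < ∑ k ∈ Finset.range l, A k x := by
          apply lt_of_lt_of_le _ (Finset.single_le_sum (f := fun k => A k x)
            (fun k _ => repAvg_nonneg n _ x) hk)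
        -- need A k x > 0
          exact lt_of_le_of_ne (repAvg_nonneg n _ x) (Ne.symm hne)
        have h2 : ((l:ℕ):ℝ)⁻¹ ≠ 0 := by
          simp only [ne_eq, inv_eq_zero, Nat.cast_eq_zero]; omega
        exact mul_ne_zero h2 (ne_of_gt h1)
    refine ⟨?_, ?_, ?_⟩
    · rw [hsupp]
      intro x hx
      simp only [Finset.coe_biUnion, Set.mem_iUnion, Finset.mem_coe, Finset.mem_biUnion] at hx
      obtain ⟨k, _, hk⟩ := hx
      exact iterRem_subset _ M k ((ih _ (hGk k)).1 hk)
    · rw [hsupp]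
      have hzero : ∀ x ∈ (Finset.range l).biUnion (fun k => (A k).support),
          ∀ k ∈ Finset.range l, True := fun _ _ _ _ => trivial
      have key : ∀ k ∈ Finset.range l,
          ∑ x ∈ (Finset.range l).biUnion (fun k => (A k).support), A k x = 1 := by
        intro k hk
        rw [← Finset.sum_subset (Finset.subset_biUnion_of_mem _ hk)
          (fun x _ hx => Finsupp.notMem_support_iff.mp hx)]
        exact (ih _ (hGk k)).2.1
      calc ∑ x ∈ (Finset.range l).biUnion (fun k => (A k).support), repAvg (n+1) M x
          = ∑ x ∈ (Finset.range l).biUnion (fun k => (A k).support),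
              ((l:ℕ):ℝ)⁻¹ * ∑ k ∈ Finset.range l, A k x := by
            apply Finset.sum_congr rfl
            intro x _
            exact repAvg_succ_apply n M x
        _ = ((l:ℕ):ℝ)⁻¹ * ∑ k ∈ Finset.range l,
              ∑ x ∈ (Finset.range l).biUnion (fun k => (A k).support), A k x := by
            rw [← Finset.mul_sum, Finset.sum_comm]
        _ = 1 := by
            rw [Finset.sum_congr rfl key]
            simp only [Finset.sum_const, Finset.card_range, nsmul_eq_mul, mul_one]
            rw [inv_mul_cancel₀]
            simp only [ne_eq, Nat.cast_eq_zero]; omega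
    · intro x hx y hy hy'
      rw [hsupp, Finset.mem_biUnion] at hx
      obtain ⟨k, hk, hxk⟩ := hx
      have hyj : ∀ j ≤ l, y ∈ iterRem (repAvg n) M j := by
        intro j hj
        induction j with
        | zero => exact hy
        | succ j ihj =>
          rw [iterRem_succ]
          refine ⟨ihj (le_of_lt hj), ?_⟩
          intro hmem
          apply hy'
          rw [hsupp, Finset.mem_biUnion]
          exact ⟨j, Finset.mem_range.mpr (by omega), by simpa using hmem⟩
      have hyk : y ∈ iterRem (repAvg n) M (k+1) := hyj (k+1) (Finset.mem_range.mp hk)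
      rw [iterRem_succ] at hyk
      exact (ih _ (hGk k)).2.2 x hxk y hyk.1 (by simpa using hyk.2)

lemma supp_subset {n : ℕ} {M : Set ℕ} (hM : Good M) : ↑(repAvg n M).support ⊆ M :=
  (struct n M hM).1

lemma mass_one {n : ℕ} {M : Set ℕ} (hM : Good M) :
    ∑ x ∈ (repAvg n M).support, repAvg n M x = 1 := (struct n M hM).2.1

lemma initseg {n : ℕ} {M : Set ℕ} (hM : Good M) :
    ∀ x ∈ (repAvg n M).support, ∀ y ∈ M, y ∉ (repAvg n M).support → x < y :=
  (struct n M hM).2.2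

end Stmt7Aux
namespace Stmt7Aux

lemma supp_succ (n : ℕ) (M : Set ℕ) (hM : Good M) :
    (repAvg (n+1) M).support =
      (Finset.range (sInf M)).biUnion (fun k => (repAvg n (iterRem (repAvg n) M k)).support) := by
  have hl1 : 1 ≤ sInf M := hM.sInf_pos
  ext x
  simp only [Finsupp.mem_support_iff, repAvg_succ_apply, Finset.mem_biUnion]
  constructor
  · intro h
    by_contra hc
    push_neg at hc
    apply h
    rw [Finset.sum_eq_zero hc, mul_zero]
  · rintro ⟨k, hk, hne⟩
    have h1 : (0:ℝ) < ∑ k ∈ Finset.range (sInf M), repAvg n (iterRem (repAvg n) M k) x := by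
      apply lt_of_lt_of_le _ (Finset.single_le_sum
        (f := fun k => repAvg n (iterRem (repAvg n) M k) x)
        (fun k _ => repAvg_nonneg n _ x) hk)
      exact lt_of_le_of_ne (repAvg_nonneg n _ x) (Ne.symm hne)
    have h2 : ((sInf M : ℕ):ℝ)⁻¹ ≠ 0 := by
      simp only [ne_eq, inv_eq_zero, Nat.cast_eq_zero]; omega
    exact mul_ne_zero h2 (ne_of_gt h1)

lemma sum_le_one {n : ℕ} {M : Set ℕ} (hM : Good M) (F : Finset ℕ) :
    ∑ x ∈ F, repAvg n M x ≤ 1 := by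
  have h1 : ∑ x ∈ F, repAvg n M x ≤ ∑ x ∈ F ∪ (repAvg n M).support, repAvg n M x :=
    Finset.sum_le_sum_of_subset_of_nonneg Finset.subset_union_left
      (fun x _ _ => repAvg_nonneg n M x)
  have h2 : ∑ x ∈ F ∪ (repAvg n M).support, repAvg n M x
      = ∑ x ∈ (repAvg n M).support, repAvg n M x := by
    rw [← Finset.sum_subset Finset.subset_union_right
      (fun x _ hx => Finsupp.notMem_support_iff.mp hx)]
  rw [h2, mass_one hM] at h1
  exact h1

lemma supp_nonempty {n : ℕ} {M : Set ℕ} (hM : Good M) : (repAvg n M).support.Nonempty := by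
  by_contra h
  rw [Finset.not_nonempty_iff_eq_empty] at h
  have := mass_one (n := n) hM
  rw [h] at this
  simp at this

lemma sInf_mem_supp {n : ℕ} {M : Set ℕ} (hM : Good M) : sInf M ∈ (repAvg n M).support := by
  by_contra h
  obtain ⟨x, hx⟩ := supp_nonempty (n := n) hM
  have h1 : x < sInf M := initseg hM x hx (sInf M) hM.sInf_mem h
  have h2 : sInf M ≤ x := Nat.sInf_le (supp_subset hM hx)
  omega

lemma next_good {n : ℕ} {M : Set ℕ} (hM : Good M) : Good (M \ ↑(repAvg n M).support) :=
  ⟨hM.1.diff ((repAvg n M).support.finite_toSet), fun h => hM.2 h.1⟩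

lemma lt_next {n : ℕ} {M : Set ℕ} (hM : Good M) :
    ∀ x ∈ (repAvg n M).support, x < sInf (M \ ↑(repAvg n M).support) := by
  intro x hx
  have hne : (M \ ↑(repAvg n M).support).Nonempty := (next_good hM).nonempty
  have hmem := Nat.sInf_mem hne
  exact initseg hM x hx _ hmem.1 (by simpa using hmem.2)

lemma sInf_lt_next {n : ℕ} {M : Set ℕ} (hM : Good M) :
    sInf M < sInf (M \ ↑(repAvg n M).support) :=
  lt_next hM _ (sInf_mem_supp hM)

lemma supp_card (n : ℕ) (M : Set ℕ) (hM : Good M) :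
    sInf M ≤ (repAvg (n+1) M).support.card := by
  rw [supp_succ n M hM]
  rw [Finset.card_biUnion]
  · calc sInf M = ∑ _k ∈ Finset.range (sInf M), 1 := by simp
      _ ≤ _ := Finset.sum_le_sum (fun k _ =>
          Finset.card_pos.mpr (supp_nonempty (hM.iterRem _ k)))
  · intro j hj k hk hjk
    rcases Nat.lt_or_ge j k with h | h
    · apply Finset.disjoint_left.mpr
      intro x hxj hxk
      have h1 : x ∈ iterRem (repAvg n) M k := supp_subset (hM.iterRem _ k) hxk
      have h2 : x ∈ iterRem (repAvg n) M (j+1) := iterRem_mono _ M h h1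
      rw [iterRem_succ] at h2
      exact h2.2 (by simpa using hxj)
    · have h' : k < j := by omega
      apply Finset.disjoint_right.mpr
      intro x hxk hxj
      have h1 : x ∈ iterRem (repAvg n) M j := supp_subset (hM.iterRem _ j) hxj
      have h2 : x ∈ iterRem (repAvg n) M (k+1) := iterRem_mono _ M h' h1
      rw [iterRem_succ] at h2
      exact h2.2 (by simpa using hxk)

/-- doubling: the minimum of `M` minus the support of `repAvg (n+1) M` is at least `2 sInf M`. -/
lemma double (n : ℕ) (M : Set ℕ) (hM : Good M) :
    2 * sInf M ≤ sInf (M \ ↑(repAvg (n+1) M).support) := by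
  set ν := sInf (M \ ↑(repAvg (n+1) M).support) with hν
  have hsub : (repAvg (n+1) M).support ⊆ Finset.Ico (sInf M) ν := by
    intro x hx
    rw [Finset.mem_Ico]
    exact ⟨Nat.sInf_le (supp_subset hM hx), lt_next hM x hx⟩
  have hcard := Finset.card_le_card hsub
  rw [Nat.card_Ico] at hcard
  have := supp_card n M hM
  omega

lemma iterRem_eq (n : ℕ) (M : Set ℕ) (hM : Good M) : ∀ j,
    iterRem (repAvg n) M j =
      M \ ↑((Finset.range j).biUnion (fun k => (repAvg n (iterRem (repAvg n) M k)).support))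
  | 0 => by simp [iterRem_zero]
  | j + 1 => by
    rw [iterRem_succ, Finset.range_add_one, Finset.biUnion_insert, Finset.coe_union,
      Set.union_comm, ← Set.diff_diff, ← iterRem_eq n M hM j]

lemma next_eq_iterRem (n : ℕ) (M : Set ℕ) (hM : Good M) :
    M \ ↑(repAvg (n+1) M).support = iterRem (repAvg n) M (sInf M) := by
  rw [iterRem_eq n M hM, supp_succ n M hM]

end Stmt7Aux
namespace Stmt7Aux

lemma natpow1 (l : ℕ) (h : 3 ≤ l) : 12*(l-1) ≤ 2^l*l := by
  rcases Nat.lt_or_ge l 4 with h'|h'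
  · have h3 : l = 3 := by omega
    subst h3; norm_num
  · have h16 : 16 ≤ 2^l := by
      calc (16:ℕ) = 2^4 := by norm_num
        _ ≤ 2^l := Nat.pow_le_pow_right (by norm_num) h'
    calc 12*(l-1) ≤ 12*l := by omega
      _ ≤ 2^l*l := Nat.mul_le_mul_right l (by omega)

lemma natpow2 (l : ℕ) (h : 3 ≤ l) : 2*(l-1) ≤ 2^(l-1) := by
  have h1 : l - 2 < 2^(l-2) := Nat.lt_two_pow_self (n := l-2)
  have h2 : 2^(l-1) = 2*2^(l-2) := by
    rw [← pow_succ']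
    congr 1
    omega
  omega

lemma natpow3 (l : ℕ) (h : 4 ≤ l) : 6*(l-1) + 3*2^(l-2) ≤ 2^(l-1)*l := by
  have h4 : 4 ≤ 2^(l-2) := by
    calc (4:ℕ) = 2^2 := by norm_num
      _ ≤ 2^(l-2) := Nat.pow_le_pow_right (by norm_num) (by omega)
  have h2 : 2^(l-1) = 2*2^(l-2) := by
    rw [← pow_succ']
    congr 1
    omega
  have key : 6*(l-1) ≤ 2^(l-2)*(2*l-3) := by
    calc 6*(l-1) ≤ 4*(2*l-3) := by omega
      _ ≤ 2^(l-2)*(2*l-3) := Nat.mul_le_mul_right _ h4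
  have key2 : 2^(l-2)*(2*l-3) + 3*2^(l-2) = 2^(l-2)*(2*l) := by
    have h3 : (2*l-3) + 3 = 2*l := by omega
    calc 2^(l-2)*(2*l-3) + 3*2^(l-2) = 2^(l-2)*((2*l-3) + 3) := by ring
      _ = 2^(l-2)*(2*l) := by rw [h3]
  calc 6*(l-1) + 3*2^(l-2) ≤ 2^(l-2)*(2*l-3) + 3*2^(l-2) := by omega
    _ = 2^(l-2)*(2*l) := key2
    _ = 2^(l-1)*l := by rw [h2]; ring

lemma natpow5 (l : ℕ) : l-1 ≤ 2^(l-1) := by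
  have := Nat.lt_two_pow_self (n := l-1)
  omega

set_option maxHeartbeats 2000000 in
lemma key_arith (l k0 μ M ν t B m : ℕ)
    (hk : k0 + 3 ≤ l)
    (hμ : 2^k0 * l ≤ μ)
    (hM : 2*μ ≤ M)
    (hν : 2^(l-1-k0) * M ≤ ν)
    (hm : m < M)
    (htB : t + B ≤ m)
    (X : ℝ) (hX0 : 0 ≤ X) (hX1 : X ≤ 1)
    (hX2 : X ≤ (t:ℝ) * (3/(μ:ℝ) - 3/(M:ℝ))) :
    X + (1/2 + 3*(B:ℝ)/(2*(M:ℝ))) + (3/(M:ℝ) - 3/(ν:ℝ)) ≤ 3 - 3*(l:ℝ)/(ν:ℝ) := by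
  -- basic nat facts
  have hl3 : 3 ≤ l := by omega
  have hμl : l ≤ μ := by
    have h1 : 1 ≤ 2^k0 := Nat.one_le_two_pow
    nlinarith
  have hμ3 : 3 ≤ μ := le_trans hl3 hμl
  have hM6 : 6 ≤ M := by omega
  have hν4M : 4*M ≤ ν := by
    have h4 : 4 ≤ 2^(l-1-k0) := by
      calc (4:ℕ) = 2^2 := by norm_num
        _ ≤ 2^(l-1-k0) := Nat.pow_le_pow_right (by norm_num) (by omega)
    nlinarith
  have hν2l : 2^l * l ≤ ν := by
    have h1 : 2^(l-1-k0) * (2 * (2^k0 * l)) ≤ 2^(l-1-k0) * M := by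
      apply Nat.mul_le_mul_left
      omega
    have heq : 2^(l-1-k0) * (2 * (2^k0 * l)) = 2^l * l := by
      have e : 2^(l-1-k0) * 2^k0 * 2 = 2^l := by
        rw [← pow_add, ← pow_succ]
        congr 1
        omega
      calc 2^(l-1-k0) * (2 * (2^k0 * l)) = (2^(l-1-k0) * 2^k0 * 2) * l := by ring
        _ = 2^l * l := by rw [e]
    omega
  -- real positivity and casts
  have hμR : (0:ℝ) < (μ:ℝ) := by exact_mod_cast (by omega : 0 < μ)
  have hMR : (0:ℝ) < (M:ℝ) := by exact_mod_cast (by omega : 0 < M)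
  have hνR : (0:ℝ) < (ν:ℝ) := by exact_mod_cast (by omega : 0 < ν)
  have hlR : (3:ℝ) ≤ (l:ℝ) := by exact_mod_cast hl3
  have hμR3 : (3:ℝ) ≤ (μ:ℝ) := by exact_mod_cast hμ3
  have hMR6 : (6:ℝ) ≤ (M:ℝ) := by exact_mod_cast hM6
  have hMR2μ : 2*(μ:ℝ) ≤ (M:ℝ) := by exact_mod_cast hM
  -- common bound : 3(l-1)/ν ≤ 1/4
  have hp2 : 3*((l:ℝ)-1)/(ν:ℝ) ≤ 1/4 := by
    rw [div_le_div_iff₀ hνR (by norm_num)]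
    have h1 : 12*(l-1) ≤ ν := le_trans (natpow1 l hl3) hν2l
    have h1R : 12*((l:ℝ)-1) ≤ (ν:ℝ) := by
      have : ((12*(l-1) : ℕ) : ℝ) ≤ ((ν:ℕ):ℝ) := by exact_mod_cast h1
      push_cast [Nat.cast_sub (by omega : 1 ≤ l)] at this
      linarith
    linarith
  -- the core inequality
  have hGI : X + (3 - 3*(t:ℝ))/(2*(M:ℝ)) + 3*((l:ℝ)-1)/(ν:ℝ) ≤ 1 := by
    rcases Nat.eq_zero_or_pos t with ht0 | ht1
    · -- t = 0
      subst ht0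
      have hX0' : X ≤ 0 := by simpa using hX2
      have p1 : (3:ℝ)/(2*(M:ℝ)) ≤ 1/4 := by
        rw [div_le_div_iff₀ (by positivity) (by norm_num)]
        linarith
      push_cast
      linarith
    · rcases Nat.lt_or_ge t 2 with ht1' | ht2
      · -- t = 1
        have ht : t = 1 := by omega
        subst ht
        have p1 : X ≤ 3/(μ:ℝ) - 3/(M:ℝ) := by simpa using hX2
        have hMnn : (0:ℝ) ≤ 3/(M:ℝ) := by positivity
        have hzero : (3 - 3*((1:ℕ):ℝ))/(2*(M:ℝ)) = 0 := by norm_num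
        rcases Nat.lt_or_ge μ 6 with hμ5 | hμ6
        · -- μ ≤ 5 : then k0 = 0 and l ≤ 5
          have hk0 : k0 = 0 := by
            by_contra hne
            have h2 : 2 ≤ 2^k0 := by
              calc (2:ℕ) = 2^1 := by norm_num
                _ ≤ 2^k0 := Nat.pow_le_pow_right (by norm_num) (by omega)
            nlinarith
          have h1 : (l-1)*M ≤ ν := by
            have := Nat.mul_le_mul_right M (natpow5 l)
            rw [hk0] at hν
            simp only [Nat.sub_zero] at hν
            omega
          have p2 : 3*((l:ℝ)-1)/(ν:ℝ) ≤ 3/(M:ℝ) := by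
            rw [div_le_div_iff₀ hνR hMR]
            have h1R : ((l:ℝ)-1)*(M:ℝ) ≤ (ν:ℝ) := by
              have : (((l-1)*M : ℕ) : ℝ) ≤ ((ν:ℕ):ℝ) := by exact_mod_cast h1
              push_cast [Nat.cast_sub (by omega : 1 ≤ l)] at this
              linarith
            nlinarith
          have p3 : 3/(μ:ℝ) ≤ 1 := by
            rw [div_le_one hμR]
            linarith
          push_cast
          linarith
        · -- μ ≥ 6
          have p3 : 3/(μ:ℝ) ≤ 1/2 := by
            rw [div_le_div_iff₀ hμR (by norm_num)]
            have : (6:ℝ) ≤ (μ:ℝ) := by exact_mod_cast hμ6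
            linarith
          push_cast
          linarith
      · -- t ≥ 2
        have htR : (2:ℝ) ≤ (t:ℝ) := by exact_mod_cast ht2
        rcases Nat.lt_or_ge μ (3*t+1) with hcap | hlin
        · -- μ ≤ 3t : use X ≤ 1
          have hnat : 2*(l-1) ≤ (t-1) * 2^(l-1-k0) := by
            rcases Nat.eq_zero_or_pos k0 with hk00 | hk01
            · subst hk00
              have h1 : 1 ≤ t - 1 := by omega
              calc 2*(l-1) ≤ 2^(l-1) := natpow2 l hl3
                _ = 1 * 2^(l-1) := (one_mul _).symm
                _ ≤ (t-1) * 2^(l-1) := Nat.mul_le_mul_right _ h1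
                _ = (t-1) * 2^(l-1-0) := by norm_num
            · -- k0 ≥ 1
              have h1 : 2^k0*l ≤ 3*t := by omega
              have h2 : 2^(l-1-k0) ≤ 2^(l-2) :=
                Nat.pow_le_pow_right (by norm_num) (by omega)
              have h3 : 2^k0 * 2^(l-1-k0) = 2^(l-1) := by
                rw [← pow_add]
                congr 1
                omega
              have h4 := natpow3 l (by omega)
              have e1 : 2^k0*l*2^(l-1-k0) ≤ 3*t*2^(l-1-k0) :=
                Nat.mul_le_mul_right _ h1
              have e2 : 2^k0*l*2^(l-1-k0) = 2^(l-1)*l := by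
                rw [show 2^k0*l*2^(l-1-k0) = (2^k0*2^(l-1-k0))*l by ring, h3]
              have e4 : (t-1)*2^(l-1-k0)*3 + 3*2^(l-1-k0) = 3*t*2^(l-1-k0) := by
                obtain ⟨s, rfl⟩ : ∃ s, t = s + 1 := ⟨t - 1, by omega⟩
                simp only [Nat.add_sub_cancel]
                ring
              omega
          have hnat2 : 2*M*(l-1) ≤ (t-1)*ν := by
            calc 2*M*(l-1) = M*(2*(l-1)) := by ring
              _ ≤ M*((t-1)*2^(l-1-k0)) := Nat.mul_le_mul_left M hnat
              _ = (t-1)*(2^(l-1-k0)*M) := by ring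
              _ ≤ (t-1)*ν := Nat.mul_le_mul_left _ hν
          have p : 3*((l:ℝ)-1)/(ν:ℝ) ≤ (3*(t:ℝ)-3)/(2*(M:ℝ)) := by
            rw [div_le_div_iff₀ hνR (by positivity)]
            have hR : 2*(M:ℝ)*((l:ℝ)-1) ≤ ((t:ℝ)-1)*(ν:ℝ) := by
              have : ((2*M*(l-1) : ℕ) : ℝ) ≤ (((t-1)*ν : ℕ) : ℝ) := by exact_mod_cast hnat2
              push_cast [Nat.cast_sub (by omega : 1 ≤ l), Nat.cast_sub (by omega : 1 ≤ t)] at this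
              linarith
            nlinarith
          have hneg : (3 - 3*(t:ℝ))/(2*(M:ℝ)) = -((3*(t:ℝ)-3)/(2*(M:ℝ))) := by ring
          linarith
        · -- 3t + 1 ≤ μ : the linear branch
          have hμ0 : (μ:ℝ) ≠ 0 := ne_of_gt hμR
          have hM0 : (M:ℝ) ≠ 0 := ne_of_gt hMR
          have hc : (0:ℝ) ≤ 3/(μ:ℝ) - 9/(2*(M:ℝ)) := by
            rw [sub_nonneg, div_le_div_iff₀ (by positivity) hμR]
            nlinarith
          have ht' : (t:ℝ) ≤ ((μ:ℝ)-1)/3 := by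
            rw [le_div_iff₀ (by norm_num)]
            have : (3*t+1 : ℝ) ≤ (μ:ℝ) := by exact_mod_cast hlin
            linarith
          have step1 : (t:ℝ)*(3/(μ:ℝ) - 3/(M:ℝ)) + (3 - 3*(t:ℝ))/(2*(M:ℝ))
              = (t:ℝ)*(3/(μ:ℝ) - 9/(2*(M:ℝ))) + 3/(2*(M:ℝ)) := by
            field_simp
            ring
          have step2 : (t:ℝ)*(3/(μ:ℝ) - 9/(2*(M:ℝ)))
              ≤ (((μ:ℝ)-1)/3)*(3/(μ:ℝ) - 9/(2*(M:ℝ))) :=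
            mul_le_mul_of_nonneg_right ht' hc
          have step3 : (((μ:ℝ)-1)/3)*(3/(μ:ℝ) - 9/(2*(M:ℝ))) + 3/(2*(M:ℝ))
              = 1 - 1/(μ:ℝ) - (3*(μ:ℝ)-6)/(2*(M:ℝ)) := by
            field_simp
            ring
          have step4 : 3*((l:ℝ)-1)/(ν:ℝ) ≤ (3*(μ:ℝ)-6)/(2*(M:ℝ)) := by
            rw [div_le_div_iff₀ hνR (by positivity)]
            have h6 : 6*(l-1) ≤ 4*(3*μ-6) := by omega
            have hνμ : (3*μ-6)*(4*M) ≤ (3*μ-6)*ν := Nat.mul_le_mul_left _ hν4M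
            have hnat3 : 6*M*(l-1) ≤ (3*μ-6)*ν := by
              calc 6*M*(l-1) = M*(6*(l-1)) := by ring
                _ ≤ M*(4*(3*μ-6)) := Nat.mul_le_mul_left M h6
                _ = (3*μ-6)*(4*M) := by ring
                _ ≤ (3*μ-6)*ν := hνμ
            have hR : 6*(M:ℝ)*((l:ℝ)-1) ≤ (3*(μ:ℝ)-6)*(ν:ℝ) := by
              have : ((6*M*(l-1) : ℕ) : ℝ) ≤ (((3*μ-6)*ν : ℕ) : ℝ) := by exact_mod_cast hnat3
              push_cast [Nat.cast_sub (by omega : 1 ≤ l), Nat.cast_sub (by omega : 6 ≤ 3*μ)] at this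
              linarith
            nlinarith
          have step5 : (0:ℝ) ≤ 1/(μ:ℝ) := by positivity
          have hXle : X ≤ (t:ℝ)*(3/(μ:ℝ) - 3/(M:ℝ)) := hX2
          linarith
  -- conclude
  have hBR : (B:ℝ) ≤ (M:ℝ) - 1 - (t:ℝ) := by
    have h' : B + t + 1 ≤ M := by omega
    have : ((B + t + 1 : ℕ) : ℝ) ≤ ((M:ℕ):ℝ) := by exact_mod_cast h'
    push_cast at this
    linarith
  have e1 : 3*(B:ℝ)/(2*(M:ℝ)) ≤ 3*((M:ℝ)-1-(t:ℝ))/(2*(M:ℝ)) := by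
    rw [div_le_div_iff_of_pos_right (by positivity)]
    linarith
  have id1 : 3*((M:ℝ)-1-(t:ℝ))/(2*(M:ℝ)) = 3/2 - (3+3*(t:ℝ))/(2*(M:ℝ)) := by
    field_simp
    ring
  have id2 : (3 - 3*(t:ℝ))/(2*(M:ℝ)) = 3/(M:ℝ) - (3+3*(t:ℝ))/(2*(M:ℝ)) := by
    field_simp
    ring
  have id3 : 3*((l:ℝ)-1)/(ν:ℝ) = 3*(l:ℝ)/(ν:ℝ) - 3/(ν:ℝ) := by
    field_simp
  linarith

end Stmt7Aux
namespace Stmt7Aux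

lemma key_arith2 (l k0 μ M ν : ℕ)
    (h1 : k0 < l) (h2 : l ≤ k0 + 2)
    (hμ : 2^k0 * l ≤ μ) (hM : 2*μ ≤ M) (hν : 2^(l-1-k0) * M ≤ ν) :
    ((l:ℝ) - (k0:ℝ)) ≤ 3 - 3*(l:ℝ)/(ν:ℝ) := by
  have hν2l : 2^l * l ≤ ν := by
    have hA : 2^(l-1-k0) * (2 * (2^k0 * l)) ≤ 2^(l-1-k0) * M := by
      apply Nat.mul_le_mul_left
      omega
    have heq : 2^(l-1-k0) * (2 * (2^k0 * l)) = 2^l * l := by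
      have e : 2^(l-1-k0) * 2^k0 * 2 = 2^l := by
        rw [← pow_add, ← pow_succ]
        congr 1
        omega
      calc 2^(l-1-k0) * (2 * (2^k0 * l)) = (2^(l-1-k0) * 2^k0 * 2) * l := by ring
        _ = 2^l * l := by rw [e]
    omega
  have hl1 : 1 ≤ l := by omega
  have hνR : (0:ℝ) < (ν:ℝ) := by
    have : 0 < ν := by
      have : 0 < 2^l*l := by positivity
      omega
    exact_mod_cast this
  have hlk : ((l:ℝ) - (k0:ℝ)) ≤ 2 := by
    have : (l:ℝ) ≤ (k0:ℝ) + 2 := by exact_mod_cast h2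
    linarith
  rcases Nat.lt_or_ge l 2 with hl' | hl'
  · -- l = 1
    have hl : l = 1 := by omega
    subst hl
    have hν2 : 2 ≤ ν := by
      have : 2^1*1 ≤ ν := hν2l
      omega
    have : 3*((1:ℕ):ℝ)/(ν:ℝ) ≤ 3/2 := by
      rw [div_le_div_iff₀ hνR (by norm_num)]
      have : (2:ℝ) ≤ (ν:ℝ) := by exact_mod_cast hν2
      push_cast
      linarith
    push_cast at this ⊢
    linarith
  · -- l ≥ 2
    have h4l : 4*l ≤ ν := by
      have h4 : 4 ≤ 2^l := by
        calc (4:ℕ) = 2^2 := by norm_num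
          _ ≤ 2^l := Nat.pow_le_pow_right (by norm_num) hl'
      nlinarith
    have : 3*(l:ℝ)/(ν:ℝ) ≤ 1 := by
      rw [div_le_one hνR]
      have h1R : 4*(l:ℝ) ≤ (ν:ℝ) := by exact_mod_cast h4l
      have h2R : (1:ℝ) ≤ (l:ℝ) := by exact_mod_cast hl1
      linarith
    linarith

lemma sInf_coe_singleton (x : ℕ) : sInf (↑({x} : Finset ℕ) : Set ℕ) = x := by
  rw [Finset.coe_singleton, csInf_singleton]

/-- Every nonempty set in `Schreier n` (`n ≥ 1`) admits a convolution decomposition. -/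
lemma schreier_decomp {n : ℕ} (hn : 1 ≤ n) {F : Finset ℕ} (hF : F ∈ Schreier n) :
    F = ∅ ∨ ∃ (d : ℕ) (Es : Fin d → Finset ℕ),
      (∀ i, Es i ∈ Schreier (n-1)) ∧ (∀ i, (Es i).Nonempty) ∧
      (∀ i j : Fin d, i < j → FinsetLT (Es i) (Es j)) ∧
      ((Finset.image (fun i => sInf (↑(Es i) : Set ℕ)) Finset.univ) ∈ SchreierOne) ∧
      F = Finset.univ.biUnion Es := by
  match n, hn with
  | 1, _ =>
    rcases Finset.eq_empty_or_nonempty F with hFe | hFne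
    · exact Or.inl hFe
    right
    have hF1 : F ∈ SchreierOne := hF
    refine ⟨F.card, fun i => {F.orderEmbOfFin rfl i}, ?_, ?_, ?_, ?_, ?_⟩
    · intro i
      simp [Schreier]
    · intro i
      exact Finset.singleton_nonempty _
    · intro i j hij a ha b hb
      rw [Finset.mem_singleton] at ha hb
      subst ha; subst hb
      exact (F.orderEmbOfFin rfl).strictMono hij
    · have himg : (Finset.image (fun i => sInf (↑(({F.orderEmbOfFin rfl i} : Finset ℕ)) : Set ℕ))
          Finset.univ) = F := by
        ext x
        simp only [Finset.mem_image, Finset.mem_univ, true_and, sInf_coe_singleton]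
        constructor
        · rintro ⟨i, rfl⟩
          exact Finset.orderEmbOfFin_mem F rfl i
        · intro hx
          have : x ∈ Set.range (F.orderEmbOfFin rfl) := by
            rw [Finset.range_orderEmbOfFin]
            exact hx
          obtain ⟨i, hi⟩ := this
          exact ⟨i, hi⟩
      rw [himg]
      exact hF1
    · ext x
      simp only [Finset.mem_biUnion, Finset.mem_univ, true_and, Finset.mem_singleton]
      constructor
      · intro hx
        have : x ∈ Set.range (F.orderEmbOfFin rfl) := by
          rw [Finset.range_orderEmbOfFin]
          exact hx
        obtain ⟨i, hi⟩ := this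
        exact ⟨i, hi.symm⟩
      · rintro ⟨i, rfl⟩
        exact Finset.orderEmbOfFin_mem F rfl i
  | (m+2), _ => exact hF

end Stmt7Aux
namespace Stmt7Aux

set_option maxHeartbeats 2000000 in
lemma main : ∀ (n : ℕ) (M : Set ℕ), Good M → ∀ F ∈ Schreier n,
    ∑ x ∈ F, repAvg (n+1) M x ≤
      3/((sInf M : ℕ):ℝ) - 3/((sInf (M \ ↑(repAvg (n+1) M).support) : ℕ):ℝ) := by
  intro n
  induction n with
  | zero =>
    intro M hM F hF
    set l := sInf M with hldef
    have hl1 : 1 ≤ l := hM.sInf_pos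
    set ν := sInf (M \ ↑(repAvg 1 M).support) with hνdef
    have hν2l : 2*l ≤ ν := double 0 M hM
    have hGk : ∀ k, Good (iterRem (repAvg 0) M k) := hM.iterRem _
    have hmono : StrictMono (fun k => sInf (iterRem (repAvg 0) M k)) := by
      apply strictMono_nat_of_lt_succ
      intro k
      exact sInf_lt_next (hGk k)
    have hcoord : ∀ x, repAvg 1 M x ≤ ((l:ℕ):ℝ)⁻¹ := by
      intro x
      rw [repAvg_succ_apply]
      have hsum : ∑ k ∈ Finset.range l, repAvg 0 (iterRem (repAvg 0) M k) x ≤ 1 := by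
        have heach : ∀ k, repAvg 0 (iterRem (repAvg 0) M k) x
            = if (fun k => sInf (iterRem (repAvg 0) M k)) k = x then (1:ℝ) else 0 := by
          intro k
          rw [repAvg_zero, Finsupp.single_apply]
        rw [Finset.sum_congr rfl (fun k _ => heach k), Finset.sum_boole]
        have hcard : ((Finset.range l).filter
            (fun k => (fun k => sInf (iterRem (repAvg 0) M k)) k = x)).card ≤ 1 := by
          apply Finset.card_le_one.mpr
          intro a ha b hb
          rw [Finset.mem_filter] at ha hb
          exact hmono.injective (ha.2.trans hb.2.symm)
        exact_mod_cast hcard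
      have hpos : (0:ℝ) ≤ ((l:ℕ):ℝ)⁻¹ := by positivity
      calc ((l:ℕ):ℝ)⁻¹ * ∑ k ∈ Finset.range l, repAvg 0 (iterRem (repAvg 0) M k) x
          ≤ ((l:ℕ):ℝ)⁻¹ * 1 := by
            apply mul_le_mul_of_nonneg_left hsum hpos
        _ = ((l:ℕ):ℝ)⁻¹ := mul_one _
    have hsumF : ∑ x ∈ F, repAvg 1 M x ≤ ((l:ℕ):ℝ)⁻¹ := by
      have hcard : F.card ≤ 1 := hF
      calc ∑ x ∈ F, repAvg 1 M x ≤ F.card • ((l:ℕ):ℝ)⁻¹ :=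
            Finset.sum_le_card_nsmul F _ _ (fun x _ => hcoord x)
        _ = (F.card : ℝ) * ((l:ℕ):ℝ)⁻¹ := by rw [nsmul_eq_mul]
        _ ≤ 1 * ((l:ℕ):ℝ)⁻¹ := by
            apply mul_le_mul_of_nonneg_right _ (by positivity)
            exact_mod_cast hcard
        _ = ((l:ℕ):ℝ)⁻¹ := one_mul _
    have hlR : (1:ℝ) ≤ ((l:ℕ):ℝ) := by exact_mod_cast hl1
    have hlR0 : (0:ℝ) < ((l:ℕ):ℝ) := by linarith
    have hνR0 : (0:ℝ) < ((ν:ℕ):ℝ) := by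
      have : 0 < ν := by omega
      exact_mod_cast this
    have hν2lR : 2*((l:ℕ):ℝ) ≤ ((ν:ℕ):ℝ) := by exact_mod_cast hν2l
    have hbound : 3/((ν:ℕ):ℝ) ≤ (3/2)*(1/((l:ℕ):ℝ)) := by
      have h' : 3/((ν:ℕ):ℝ) ≤ (3/2)/((l:ℕ):ℝ) := by
        rw [div_le_div_iff₀ hνR0 hlR0]
        linarith
      have h'' : (3/2)/((l:ℕ):ℝ) = (3/2)*(1/((l:ℕ):ℝ)) := by ring
      linarith
    have hid : 3/((l:ℕ):ℝ) = 3*(1/((l:ℕ):ℝ)) := by ring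
    have hid2 : ((l:ℕ):ℝ)⁻¹ = 1/((l:ℕ):ℝ) := by rw [one_div]
    have hpos1l : (0:ℝ) ≤ 1/((l:ℕ):ℝ) := by positivity
    linarith [hsumF]
  | succ n ih =>
    intro M hM F hF
    classical
    set l := sInf M with hldef
    have hl1 : 1 ≤ l := hM.sInf_pos
    set A : ℕ → (ℕ →₀ ℝ) := fun k => repAvg (n+1) (iterRem (repAvg (n+1)) M k) with hAdef
    have hGk : ∀ k, Good (iterRem (repAvg (n+1)) M k) := hM.iterRem _
    set μf : ℕ → ℕ := fun k => sInf (iterRem (repAvg (n+1)) M k) with hμdef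
    have hνeq : sInf (M \ ↑(repAvg (n+1+1) M).support) = μf l := by
      rw [next_eq_iterRem (n+1) M hM]
    have hμ0 : μf 0 = l := rfl
    have hstep : ∀ k, 2 * μf k ≤ μf (k+1) := by
      intro k
      exact double n (iterRem (repAvg (n+1)) M k) (hGk k)
    have hμ1 : ∀ k, 1 ≤ μf k := fun k => (hGk k).sInf_pos
    have hmono : Monotone μf := by
      apply monotone_nat_of_le_succ
      intro k
      have := hstep k
      have := hμ1 k
      omega
    have hgeo : ∀ a b, a ≤ b → 2^(b-a) * μf a ≤ μf b := by
      intro a b hab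
      induction b with
      | zero =>
        have ha0 : a = 0 := by omega
        subst ha0
        simp
      | succ b ihb =>
        rcases Nat.lt_or_ge a (b+1) with h' | h'
        · have hab' : a ≤ b := by omega
          have h1 := ihb hab'
          have h2 := hstep b
          have he : b+1-a = (b-a)+1 := by omega
          rw [he, pow_succ]
          nlinarith
        · have : a = b+1 := by omega
          subst this
          simp
    have hTform : ∑ x ∈ F, repAvg (n+1+1) M x
        = ((l:ℕ):ℝ)⁻¹ * ∑ k ∈ Finset.range l, ∑ x ∈ F, A k x := by
      rw [Finset.sum_congr rfl (fun x _ => repAvg_succ_apply (n+1) M x), ← Finset.mul_sum,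
        Finset.sum_comm]
    set T := ∑ k ∈ Finset.range l, ∑ x ∈ F, A k x with hTdef
    have hblock_nonneg : ∀ k, (0:ℝ) ≤ ∑ x ∈ F, A k x :=
      fun k => Finset.sum_nonneg (fun x _ => repAvg_nonneg _ _ x)
    have hblock_le1 : ∀ k, ∑ x ∈ F, A k x ≤ 1 := fun k => sum_le_one (hGk k) F
    have hlν : l ≤ μf l := by
      have h1 := hgeo 0 l (Nat.zero_le l)
      have h2 : 1 ≤ 2^(l-0) := Nat.one_le_two_pow
      rw [hμ0] at h1
      nlinarith
    have hlR0 : (0:ℝ) < ((l:ℕ):ℝ) := by exact_mod_cast hl1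
    have hνR0 : (0:ℝ) < ((μf l:ℕ):ℝ) := by
      have : 0 < μf l := by have := hμ1 l; omega
      exact_mod_cast this
    suffices hT : T ≤ 3 - 3*((l:ℕ):ℝ)/((μf l : ℕ):ℝ) by
      rw [hTform, hνeq]
      have h1 : ((l:ℕ):ℝ)⁻¹ * T ≤ ((l:ℕ):ℝ)⁻¹ * (3 - 3*((l:ℕ):ℝ)/((μf l : ℕ):ℝ)) :=
        mul_le_mul_of_nonneg_left hT (by positivity)
      have h2 : ((l:ℕ):ℝ)⁻¹ * (3 - 3*((l:ℕ):ℝ)/((μf l : ℕ):ℝ))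
          = 3/((l:ℕ):ℝ) - 3/((μf l : ℕ):ℝ) := by
        field_simp
      linarith
    have htriv : (0:ℝ) ≤ 3 - 3*((l:ℕ):ℝ)/((μf l : ℕ):ℝ) := by
      have h1 : 3*((l:ℕ):ℝ)/((μf l : ℕ):ℝ) ≤ 3 := by
        rw [div_le_iff₀ hνR0]
        have : ((l:ℕ):ℝ) ≤ ((μf l:ℕ):ℝ) := by exact_mod_cast hlν
        nlinarith
      linarith
    rcases schreier_decomp (by omega : 1 ≤ n+1) hF with hFe | ⟨d, Es, hmem, hne, hlt, hS1, hFeq⟩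
    · have hT0 : T = 0 := by
        apply Finset.sum_eq_zero
        intro k _
        rw [hFe]
        simp
      rw [hT0]
      exact htriv
    have hdisjE : ∀ i j : Fin d, i ≠ j → Disjoint (Es i) (Es j) := by
      intro i j hij
      rcases lt_trichotomy i j with h|h|h
      · exact Finset.disjoint_left.mpr (fun x hxi hxj => lt_irrefl x (hlt i j h x hxi x hxj))
      · exact absurd h hij
      · exact Finset.disjoint_right.mpr (fun x hxj hxi => lt_irrefl x (hlt j i h x hxj x hxi))
    have hFsum : ∀ k, ∑ x ∈ F, A k x = ∑ i : Fin d, ∑ x ∈ Es i, A k x := by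
      intro k
      rw [hFeq]
      exact Finset.sum_biUnion (fun i _ j _ hij => hdisjE i j hij)
    have hsnn : ∀ (k : ℕ) (i : Fin d), (0:ℝ) ≤ ∑ x ∈ Es i, A k x :=
      fun k i => Finset.sum_nonneg (fun x _ => repAvg_nonneg _ _ x)
    have hIH : ∀ (k : ℕ) (i : Fin d),
        ∑ x ∈ Es i, A k x ≤ 3/((μf k:ℕ):ℝ) - 3/((μf (k+1):ℕ):ℝ) :=
      fun k i => ih (iterRem (repAvg (n+1)) M k) (hGk k) (Es i) (hmem i)
    have hδ0 : ∀ k, (0:ℝ) ≤ 3/((μf k:ℕ):ℝ) - 3/((μf (k+1):ℕ):ℝ) := by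
      intro k
      have h1 : (0:ℝ) < ((μf k:ℕ):ℝ) := by
        have : 0 < μf k := by have := hμ1 k; omega
        exact_mod_cast this
      have h2 : (0:ℝ) < ((μf (k+1):ℕ):ℝ) := by
        have : 0 < μf (k+1) := by have := hμ1 (k+1); omega
        exact_mod_cast this
      have h3 : ((μf k:ℕ):ℝ) ≤ ((μf (k+1):ℕ):ℝ) := by
        exact_mod_cast hmono (Nat.le_succ k)
      rw [sub_nonneg, div_le_div_iff₀ h2 h1]
      nlinarith
    set hit : ℕ → Fin d → Prop := fun k i => ((Es i) ∩ (A k).support).Nonempty with hhitdef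
    have hs_hit0 : ∀ (k : ℕ) (i : Fin d), ¬ hit k i → ∑ x ∈ Es i, A k x = 0 := by
      intro k i h
      apply Finset.sum_eq_zero
      intro x hx
      by_contra hne0
      exact h ⟨x, Finset.mem_inter.mpr ⟨hx, Finsupp.mem_support_iff.mpr hne0⟩⟩
    rcases Finset.eq_empty_or_nonempty
        ((Finset.range l).filter (fun k => ∃ i, hit k i)) with hHK | hHK
    · have hT0 : T = 0 := by
        apply Finset.sum_eq_zero
        intro k hk
        rw [hFsum k]
        apply Finset.sum_eq_zero
        intro i _
        apply hs_hit0
        intro hhit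
        have hmem' : k ∈ (Finset.range l).filter (fun k => ∃ i, hit k i) :=
          Finset.mem_filter.mpr ⟨hk, ⟨i, hhit⟩⟩
        rw [hHK] at hmem'
        simp at hmem'
      rw [hT0]
      exact htriv
    set k0 := ((Finset.range l).filter (fun k => ∃ i, hit k i)).min' hHK with hk0def
    have hk0mem := Finset.min'_mem _ hHK
    rw [Finset.mem_filter] at hk0mem
    have hk0l : k0 < l := Finset.mem_range.mp hk0mem.1
    obtain ⟨i0, hi0⟩ := hk0mem.2
    have hnohit : ∀ k, k < k0 → ∀ i : Fin d, ¬ hit k i := by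
      intro k hk i hhit
      have hkl : k < l := lt_trans hk hk0l
      have : k0 ≤ k := Finset.min'_le _ _ (Finset.mem_filter.mpr
        ⟨Finset.mem_range.mpr hkl, ⟨i, hhit⟩⟩)
      omega
    have hsupp_lb : ∀ k x, x ∈ (A k).support → μf k ≤ x :=
      fun k x hx => Nat.sInf_le (supp_subset (hGk k) hx)
    have hsupp_ub : ∀ k x, x ∈ (A k).support → x < μf (k+1) :=
      fun k x hx => lt_next (hGk k) x hx
    obtain ⟨x0, hx0⟩ := hi0
    rw [Finset.mem_inter] at hx0
    have hminle : sInf (↑(Es i0) : Set ℕ) ≤ x0 := Nat.sInf_le hx0.1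
    have hdle : d ≤ sInf (↑(Es i0) : Set ℕ) := by
      have hkey : ∀ i j : Fin d, i < j →
          sInf (↑(Es i) : Set ℕ) = sInf (↑(Es j) : Set ℕ) → False := by
        intro i j hij' heq'
        have h1 : sInf (↑(Es i) : Set ℕ) ∈ (↑(Es i) : Set ℕ) := by
          apply Nat.sInf_mem
          obtain ⟨y, hy⟩ := hne i
          exact ⟨y, hy⟩
        have h2 : sInf (↑(Es j) : Set ℕ) ∈ (↑(Es j) : Set ℕ) := by
          apply Nat.sInf_mem
          obtain ⟨y, hy⟩ := hne j
          exact ⟨y, hy⟩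
        have := hlt i j hij' _ h1 _ h2
        omega
      have hinj : Function.Injective (fun i : Fin d => sInf (↑(Es i) : Set ℕ)) := by
        intro i j hij
        by_contra hne'
        rcases lt_trichotomy i j with h|h|h
        · exact hkey i j h hij
        · exact hne' h
        · exact hkey j i h hij.symm
      have hcard : (Finset.image (fun i : Fin d => sInf (↑(Es i) : Set ℕ)) Finset.univ).card
          = d := by
        rw [Finset.card_image_of_injective _ hinj, Finset.card_univ, Fintype.card_fin]
      have := hS1 (sInf (↑(Es i0) : Set ℕ))
        (Finset.mem_image.mpr ⟨i0, Finset.mem_univ _, rfl⟩)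
      omega
    have hmM : x0 < μf (k0+1) := hsupp_ub k0 x0 hx0.2
    have hdm : d ≤ x0 := le_trans hdle hminle
    set newp : ℕ → Fin d → Prop := fun k i => hit k i ∧ ∀ k', k' < k → ¬ hit k' i with hnewpdef
    set oldp : ℕ → Fin d → Prop := fun k i => hit k i ∧ ∃ k', k' < k ∧ hit k' i with holdpdef
    set NewS : ℕ → ℝ := fun k =>
      ∑ i ∈ Finset.univ.filter (fun i => newp k i), ∑ x ∈ Es i, A k x with hNewSdef
    set OldS : ℕ → ℝ := fun k =>
      ∑ i ∈ Finset.univ.filter (fun i => oldp k i), ∑ x ∈ Es i, A k x with hOldSdef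
    have hsplit : ∀ k, ∑ x ∈ F, A k x = NewS k + OldS k := by
      intro k
      rw [hFsum k]
      have h1 : ∑ i : Fin d, ∑ x ∈ Es i, A k x
          = ∑ i ∈ Finset.univ.filter (fun i => hit k i), ∑ x ∈ Es i, A k x := by
        symm
        apply Finset.sum_subset (Finset.filter_subset _ _)
        intro i _ hi
        apply hs_hit0
        intro hhit
        exact hi (Finset.mem_filter.mpr ⟨Finset.mem_univ _, hhit⟩)
      rw [h1]
      have h2 : Finset.univ.filter (fun i => hit k i)
          = (Finset.univ.filter (fun i => newp k i)) ∪
            (Finset.univ.filter (fun i => oldp k i)) := by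
        ext i
        simp only [Finset.mem_filter, Finset.mem_union, Finset.mem_univ, true_and]
        constructor
        · intro h
          by_cases hx : ∃ k', k' < k ∧ hit k' i
          · exact Or.inr ⟨h, hx⟩
          · push_neg at hx
            exact Or.inl ⟨h, fun k' hk' => hx k' hk'⟩
        · rintro (h|h) <;> exact h.1
      have h3 : Disjoint (Finset.univ.filter (fun i => newp k i))
          (Finset.univ.filter (fun i => oldp k i)) := by
        apply Finset.disjoint_left.mpr
        intro i hi hio
        rw [Finset.mem_filter] at hi hio
        obtain ⟨k', hk', hhit'⟩ := hio.2.2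
        exact hi.2.2 k' hk' hhit'
      rw [h2, Finset.sum_union h3]
    have hNew_nonneg : ∀ k, (0:ℝ) ≤ NewS k :=
      fun k => Finset.sum_nonneg (fun i _ => hsnn k i)
    have hNew_le1 : ∀ k, NewS k ≤ 1 := by
      intro k
      calc NewS k ≤ ∑ i : Fin d, ∑ x ∈ Es i, A k x :=
            Finset.sum_le_sum_of_subset_of_nonneg (Finset.filter_subset _ _)
              (fun i _ _ => hsnn k i)
        _ = ∑ x ∈ F, A k x := (hFsum k).symm
        _ ≤ 1 := hblock_le1 k
    set e : ℕ → ℕ := fun k => (Finset.univ.filter (fun i => newp k i)).card with hedef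
    have hNew_le : ∀ k, NewS k ≤ (e k : ℝ) * (3/((μf k:ℕ):ℝ) - 3/((μf (k+1):ℕ):ℝ)) := by
      intro k
      calc NewS k ≤ (Finset.univ.filter (fun i => newp k i)).card •
            (3/((μf k:ℕ):ℝ) - 3/((μf (k+1):ℕ):ℝ)) :=
            Finset.sum_le_card_nsmul _ _ _ (fun i _ => hIH k i)
        _ = (e k : ℝ) * (3/((μf k:ℕ):ℝ) - 3/((μf (k+1):ℕ):ℝ)) := by
            rw [nsmul_eq_mul]
    have hOld_le : ∀ k, OldS k ≤ 3/((μf k:ℕ):ℝ) - 3/((μf (k+1):ℕ):ℝ) := by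
      intro k
      have hcard1 : (Finset.univ.filter (fun i => oldp k i)).card ≤ 1 := by
        apply Finset.card_le_one.mpr
        intro a ha b hb
        rw [Finset.mem_filter] at ha hb
        have hkey : ∀ i j : Fin d, i < j → oldp k i → oldp k j → False := by
          intro i j hij hoi hoj
          obtain ⟨y, hy⟩ := hoi.1
          rw [Finset.mem_inter] at hy
          obtain ⟨k', hk', hj'⟩ := hoj.2
          obtain ⟨z, hz⟩ := hj'
          rw [Finset.mem_inter] at hz
          have hz1 : z < μf (k'+1) := hsupp_ub k' z hz.2
          have hz2 : μf (k'+1) ≤ μf k := hmono (by omega)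
          have hyz := hlt i j hij y hy.1 z hz.1
          have hylb := hsupp_lb k y hy.2
          omega
        by_contra hne'
        rcases lt_trichotomy a b with h|h|h
        · exact hkey a b h ha.2 hb.2
        · exact hne' h
        · exact hkey b a h hb.2 ha.2
      calc OldS k ≤ (Finset.univ.filter (fun i => oldp k i)).card •
            (3/((μf k:ℕ):ℝ) - 3/((μf (k+1):ℕ):ℝ)) :=
            Finset.sum_le_card_nsmul _ _ _ (fun i _ => hIH k i)
        _ ≤ 1 * (3/((μf k:ℕ):ℝ) - 3/((μf (k+1):ℕ):ℝ)) := by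
            rw [nsmul_eq_mul]
            apply mul_le_mul_of_nonneg_right _ (hδ0 k)
            exact_mod_cast hcard1
        _ = 3/((μf k:ℕ):ℝ) - 3/((μf (k+1):ℕ):ℝ) := one_mul _
    have hOld0 : ∀ k, k ≤ k0 → OldS k = 0 := by
      intro k hk
      apply Finset.sum_eq_zero
      intro i hi
      rw [Finset.mem_filter] at hi
      obtain ⟨k', hk', hhit'⟩ := hi.2.2
      exact absurd hhit' (hnohit k' (by omega) i)
    have hNew0 : ∀ k, k < k0 → NewS k = 0 := by
      intro k hk
      apply Finset.sum_eq_zero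
      intro i hi
      rw [Finset.mem_filter] at hi
      exact absurd hi.2.1 (hnohit k hk i)
    have hbudget : e k0 + ∑ k ∈ Finset.Ico (k0+1) l, e k ≤ d := by
      have hdisjnew : ∀ k1 ∈ Finset.range l, ∀ k2 ∈ Finset.range l, k1 ≠ k2 →
          Disjoint (Finset.univ.filter (fun i => newp k1 i))
            (Finset.univ.filter (fun i => newp k2 i)) := by
        intro k1 _ k2 _ hk12
        rcases Nat.lt_or_ge k1 k2 with h|h
        · apply Finset.disjoint_left.mpr
          intro i hi1 hi2
          rw [Finset.mem_filter] at hi1 hi2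
          exact hi2.2.2 k1 h hi1.2.1
        · have h' : k2 < k1 := by omega
          apply Finset.disjoint_left.mpr
          intro i hi1 hi2
          rw [Finset.mem_filter] at hi1 hi2
          exact hi1.2.2 k2 h' hi2.2.1
      have h1 : ∑ k ∈ Finset.range l, e k
          = ((Finset.range l).biUnion
              (fun k => Finset.univ.filter (fun i => newp k i))).card :=
        (Finset.card_biUnion hdisjnew).symm
      have h2 : ((Finset.range l).biUnion
          (fun k => Finset.univ.filter (fun i => newp k i))).card ≤ d := by
        calc ((Finset.range l).biUnion
            (fun k => Finset.univ.filter (fun i => newp k i))).card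
            ≤ (Finset.univ : Finset (Fin d)).card :=
              Finset.card_le_card (Finset.subset_univ _)
          _ = d := by rw [Finset.card_univ, Fintype.card_fin]
      have h3 : e k0 + ∑ k ∈ Finset.Ico (k0+1) l, e k ≤ ∑ k ∈ Finset.range l, e k := by
        rw [← Finset.sum_range_add_sum_Ico _ (by omega : k0+1 ≤ l)]
        have h4 : e k0 ≤ ∑ k ∈ Finset.range (k0+1), e k :=
          Finset.single_le_sum (f := e) (fun k _ => Nat.zero_le _)
            (Finset.mem_range.mpr (by omega))
        omega
      omega
    have hMpos : (0:ℝ) < ((μf (k0+1):ℕ):ℝ) := by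
      have : 0 < μf (k0+1) := by have := hμ1 (k0+1); omega
      exact_mod_cast this
    have hNewIco : ∀ k ∈ Finset.Ico (k0+1) l, NewS k ≤
        (if k = k0+1 then (1:ℝ)/2 else 0) + (3/(2*((μf (k0+1):ℕ):ℝ))) * (e k : ℝ) := by
      intro k hk
      rcases eq_or_ne k (k0+1) with rfl | hne'
      · rw [if_pos rfl]
        have h1 := hNew_le (k0+1)
        have h2 := hNew_le1 (k0+1)
        have hδle : 3/((μf (k0+1):ℕ):ℝ) - 3/((μf (k0+1+1):ℕ):ℝ) ≤ 3/((μf (k0+1):ℕ):ℝ) := by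
          have h3 : (0:ℝ) ≤ 3/((μf (k0+1+1):ℕ):ℝ) := by positivity
          linarith
        have h4 : (e (k0+1) : ℝ) * (3/((μf (k0+1):ℕ):ℝ) - 3/((μf (k0+1+1):ℕ):ℝ))
            ≤ (e (k0+1) : ℝ) * (3/((μf (k0+1):ℕ):ℝ)) :=
          mul_le_mul_of_nonneg_left hδle (by positivity)
        have hid : (3/(2*((μf (k0+1):ℕ):ℝ))) * (e (k0+1) : ℝ)
            = ((e (k0+1) : ℝ) * (3/((μf (k0+1):ℕ):ℝ)))/2 := by
          field_simp
        linarith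
      · simp only [if_neg hne']
        rw [Finset.mem_Ico] at hk
        have hk2 : k0+2 ≤ k := by omega
        have h2M : 2 * μf (k0+1) ≤ μf k :=
          le_trans (hstep (k0+1)) (hmono hk2)
        have hμkpos : (0:ℝ) < ((μf k:ℕ):ℝ) := by
          have : 0 < μf k := by have := hμ1 k; omega
          exact_mod_cast this
        have hδle : 3/((μf k:ℕ):ℝ) - 3/((μf (k+1):ℕ):ℝ) ≤ 3/(2*((μf (k0+1):ℕ):ℝ)) := by
          have h1 : 3/((μf k:ℕ):ℝ) ≤ 3/(2*((μf (k0+1):ℕ):ℝ)) := by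
            rw [div_le_div_iff₀ hμkpos (by positivity)]
            have hcast : 2*((μf (k0+1):ℕ):ℝ) ≤ ((μf k:ℕ):ℝ) := by exact_mod_cast h2M
            nlinarith
          have h2 : (0:ℝ) ≤ 3/((μf (k+1):ℕ):ℝ) := by positivity
          linarith
        calc NewS k ≤ (e k : ℝ) * (3/((μf k:ℕ):ℝ) - 3/((μf (k+1):ℕ):ℝ)) := hNew_le k
          _ ≤ (e k : ℝ) * (3/(2*((μf (k0+1):ℕ):ℝ))) :=
              mul_le_mul_of_nonneg_left hδle (by positivity)
          _ = 0 + (3/(2*((μf (k0+1):ℕ):ℝ))) * (e k : ℝ) := by ring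
    have hOldTel : ∑ k ∈ Finset.Ico (k0+1) l, OldS k
        ≤ 3/((μf (k0+1):ℕ):ℝ) - 3/((μf l:ℕ):ℝ) := by
      calc ∑ k ∈ Finset.Ico (k0+1) l, OldS k
          ≤ ∑ k ∈ Finset.Ico (k0+1) l, (3/((μf k:ℕ):ℝ) - 3/((μf (k+1):ℕ):ℝ)) :=
            Finset.sum_le_sum (fun k _ => hOld_le k)
        _ = 3/((μf (k0+1):ℕ):ℝ) - 3/((μf l:ℕ):ℝ) := by
            rw [Finset.sum_Ico_eq_sum_range]
            have hcongr : ∀ j ∈ Finset.range (l - (k0+1)),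
                3/((μf (k0+1+j):ℕ):ℝ) - 3/((μf (k0+1+j+1):ℕ):ℝ)
                = (fun j => 3/((μf (k0+1+j):ℕ):ℝ)) j
                  - (fun j => 3/((μf (k0+1+j):ℕ):ℝ)) (j+1) := by
              intro j _
              rfl
            rw [Finset.sum_congr rfl hcongr, Finset.sum_range_sub']
            have e1 : k0 + 1 + (l - (k0+1)) = l := by omega
            simp only [Nat.add_zero, e1]
    have hTsplit : T = (∑ k ∈ Finset.range (k0+1), (NewS k + OldS k))
        + ∑ k ∈ Finset.Ico (k0+1) l, (NewS k + OldS k) := by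
      rw [hTdef, Finset.sum_congr rfl (fun k _ => hsplit k),
        ← Finset.sum_range_add_sum_Ico _ (by omega : k0+1 ≤ l)]
    have hhead : ∑ k ∈ Finset.range (k0+1), (NewS k + OldS k) = NewS k0 := by
      rw [Finset.sum_range_succ]
      have h1 : ∑ k ∈ Finset.range k0, (NewS k + OldS k) = 0 := by
        apply Finset.sum_eq_zero
        intro k hk
        rw [Finset.mem_range] at hk
        rw [hNew0 k hk, hOld0 k (by omega)]
        ring
      rw [h1, hOld0 k0 le_rfl]
      ring
    rcases Nat.lt_or_ge l (k0+3) with hsmall | hbig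
    · have hTblock : T ≤ ((l:ℕ):ℝ) - ((k0:ℕ):ℝ) := by
        have h1 : T = (∑ k ∈ Finset.range k0, ∑ x ∈ F, A k x)
            + ∑ k ∈ Finset.Ico k0 l, ∑ x ∈ F, A k x := by
          rw [hTdef, ← Finset.sum_range_add_sum_Ico _ (by omega : k0 ≤ l)]
        have h2 : ∑ k ∈ Finset.range k0, ∑ x ∈ F, A k x = 0 := by
          apply Finset.sum_eq_zero
          intro k hk
          rw [Finset.mem_range] at hk
          rw [hsplit k, hNew0 k hk, hOld0 k (by omega)]
          ring
        have h3 : ∑ k ∈ Finset.Ico k0 l, ∑ x ∈ F, A k x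
            ≤ (Finset.Ico k0 l).card • (1:ℝ) :=
          Finset.sum_le_card_nsmul _ _ _ (fun k _ => hblock_le1 k)
        rw [h1, h2, zero_add]
        have h4 : ((Finset.Ico k0 l).card • (1:ℝ)) = ((l - k0 : ℕ) : ℝ) := by
          rw [Nat.card_Ico, nsmul_eq_mul, mul_one]
        have h5 : ((l - k0 : ℕ) : ℝ) = ((l:ℕ):ℝ) - ((k0:ℕ):ℝ) := by
          push_cast [Nat.cast_sub (le_of_lt hk0l)]
          ring
        rw [h4, h5] at h3
        exact h3
      have harith2 := key_arith2 l k0 (μf k0) (μf (k0+1)) (μf l) hk0l (by omega)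
        (by have h := hgeo 0 k0 (Nat.zero_le k0); rw [hμ0] at h; simpa using h)
        (hstep k0)
        (by have h := hgeo (k0+1) l (by omega)
            have he : l - (k0+1) = l - 1 - k0 := by omega
            rw [he] at h; exact h)
      exact le_trans hTblock harith2
    · have hX0 : (0:ℝ) ≤ NewS k0 := hNew_nonneg k0
      have hX1 : NewS k0 ≤ 1 := hNew_le1 k0
      have hX2 : NewS k0 ≤ ((e k0 : ℕ):ℝ) *
          (3/((μf k0:ℕ):ℝ) - 3/((μf (k0+1):ℕ):ℝ)) := hNew_le k0
      set B := ∑ k ∈ Finset.Ico (k0+1) l, e k with hBdef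
      have hcastB : ((B:ℕ):ℝ) = ∑ k ∈ Finset.Ico (k0+1) l, ((e k : ℕ):ℝ) := by
        rw [hBdef]
        push_cast
        rfl
      have hNewTail : ∑ k ∈ Finset.Ico (k0+1) l, NewS k
          ≤ 1/2 + (3/(2*((μf (k0+1):ℕ):ℝ))) * ((B:ℕ):ℝ) := by
        calc ∑ k ∈ Finset.Ico (k0+1) l, NewS k
            ≤ ∑ k ∈ Finset.Ico (k0+1) l,
              ((if k = k0+1 then (1:ℝ)/2 else 0) + (3/(2*((μf (k0+1):ℕ):ℝ))) * (e k : ℝ)) :=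
              Finset.sum_le_sum hNewIco
          _ = (∑ k ∈ Finset.Ico (k0+1) l, (if k = k0+1 then (1:ℝ)/2 else 0))
              + (3/(2*((μf (k0+1):ℕ):ℝ))) * ((B:ℕ):ℝ) := by
              rw [Finset.sum_add_distrib, ← Finset.mul_sum, hcastB]
          _ ≤ 1/2 + (3/(2*((μf (k0+1):ℕ):ℝ))) * ((B:ℕ):ℝ) := by
              have h1 : ∑ k ∈ Finset.Ico (k0+1) l, (if k = k0+1 then (1:ℝ)/2 else 0) ≤ 1/2 := by
                rw [Finset.sum_ite_eq' (Finset.Ico (k0+1) l) (k0+1) (fun _ => (1:ℝ)/2)]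
                split <;> norm_num
              linarith
      have harith := key_arith l k0 (μf k0) (μf (k0+1)) (μf l) (e k0) B x0 hbig
        (by have h := hgeo 0 k0 (Nat.zero_le k0); rw [hμ0] at h; simpa using h)
        (hstep k0)
        (by have h := hgeo (k0+1) l (by omega)
            have he : l - (k0+1) = l - 1 - k0 := by omega
            rw [he] at h; exact h)
        hmM
        (by omega)
        (NewS k0) hX0 hX1 hX2
      calc T = NewS k0 + ∑ k ∈ Finset.Ico (k0+1) l, (NewS k + OldS k) := by
            rw [hTsplit, hhead]
        _ = NewS k0 + ((∑ k ∈ Finset.Ico (k0+1) l, NewS k)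
            + ∑ k ∈ Finset.Ico (k0+1) l, OldS k) := by
            rw [Finset.sum_add_distrib]
        _ ≤ NewS k0 + (1/2 + 3*((B:ℕ):ℝ)/(2*((μf (k0+1):ℕ):ℝ)))
            + (3/((μf (k0+1):ℕ):ℝ) - 3/((μf l:ℕ):ℝ)) := by
            have hidB : (3/(2*((μf (k0+1):ℕ):ℝ))) * ((B:ℕ):ℝ)
                = 3*((B:ℕ):ℝ)/(2*((μf (k0+1):ℕ):ℝ)) := by ring
            have hh1 := hNewTail
            have hh2 := hOldTel
            rw [hidB] at hh1
            linarith
        _ ≤ 3 - 3*((l:ℕ):ℝ)/((μf l:ℕ):ℝ) := harith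

end Stmt7Aux

/-- for `n ≥ 1`, `L ⊆ ℕ` infinite (with `0 ∉ L`) and every `F ∈ S_{n-1}`,
`∑_{k ∈ F} a(n,L)(k) < 3 / min L`. -/
theorem stmt_7 (n : ℕ) (hn : 1 ≤ n) (L : Set ℕ) (hL : L.Infinite) (h0 : 0 ∉ L)
    (F : Finset ℕ) (hF : F ∈ Schreier (n - 1)) :
    ∑ k ∈ F, repAvg n L k < 3 / ((sInf L : ℕ) : ℝ) := by
  obtain ⟨m, rfl⟩ : ∃ m, n = m + 1 := ⟨n - 1, by omega⟩
  have hGood : Stmt7Aux.Good L := ⟨hL, h0⟩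
  have hF' : F ∈ Schreier m := by simpa using hF
  have h := Stmt7Aux.main m L hGood F hF'
  have hνpos : (0:ℝ) < 3/((sInf (L \ ↑(repAvg (m+1) L).support) : ℕ):ℝ) := by
    have hg : Stmt7Aux.Good (L \ ↑(repAvg (m+1) L).support) := Stmt7Aux.next_good hGood
    have h1 : 0 < sInf (L \ ↑(repAvg (m+1) L).support) := hg.sInf_pos
    have h2 : (0:ℝ) < ((sInf (L \ ↑(repAvg (m+1) L).support) : ℕ):ℝ) := by exact_mod_cast h1
    positivity
  linarith
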